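/- (Proposition 1(b).) For any density matrix ρ on ℂ^m ⊗ ℂ^n, subadditivity holds: H(Tr₂ ρ) + H(Tr₁ ρ) ≥ H(ρ); moreover, if ρ = σ ⊗ τ is a tensor (Kronecker) product of density matrices σ on ℂ^m and τ on ℂ^n, then equality holds: H(σ ⊗ τ) = H(σ) + H(τ). -/

import Mathlib

open Matrix
open scoped ComplexOrder

/-- Von Neumann entropy `H(ρ) = ∑ᵢ −λᵢ log λᵢ` of a (Hermitian) matrix, where `(λᵢ)` are
its real eigenvalues (and `0 · log 0 = 0`). -/
noncomputable def vnEntropy {n : Type*} [Fintype n] [DecidableEq n]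
    (ρ : Matrix n n ℂ) : ℝ :=
  if h : ρ.IsHermitian then ∑ i, Real.negMulLog (h.eigenvalues i) else 0

/-- Partial trace over the first tensor factor. -/
noncomputable def ptraceFst {α β : Type*} [Fintype α] (M : Matrix (α × β) (α × β) ℂ) :
    Matrix β β ℂ :=
  Matrix.of fun k l => ∑ i : α, M (i, k) (i, l)

/-- Partial trace over the second tensor factor. -/
noncomputable def ptraceSnd {α β : Type*} [Fintype β] (M : Matrix (α × β) (α × β) ℂ) :
    Matrix α α ℂ :=
  Matrix.of fun i j => ∑ k : β, M (i, k) (j, k)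

section AuxLemmas
open Polynomial
variable {ι : Type*} [Fintype ι] [DecidableEq ι]

lemma my_charpoly_conj (A W : Matrix ι ι ℂ) (hW : W * Wᴴ = 1) :
    (W * A * Wᴴ).charpoly = A.charpoly := by
  have C' := (Polynomial.C : ℂ →+* ℂ[X])
  set P := W.map (Polynomial.C : ℂ → ℂ[X]) with hP
  set Q := Wᴴ.map (Polynomial.C : ℂ → ℂ[X]) with hQ
  have hPQ : P * Q = 1 := by
    rw [hP, hQ, ← Matrix.map_mul, hW]
    simp [Matrix.map_one]
  have hmap : (W * A * Wᴴ).map (Polynomial.C : ℂ → ℂ[X])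
      = P * A.map (Polynomial.C : ℂ → ℂ[X]) * Q := by
    rw [hP, hQ, ← Matrix.map_mul, ← Matrix.map_mul]
  have hchar : charmatrix (W * A * Wᴴ) = P * charmatrix A * Q := by
    simp only [charmatrix, RingHom.mapMatrix_apply]
    rw [hmap]
    rw [Matrix.mul_sub, Matrix.sub_mul]
    congr 1
    have hd : (Matrix.scalar ι (X : ℂ[X])) = (X : ℂ[X]) • (1 : Matrix ι ι ℂ[X]) := by
      ext i j
      by_cases h : i = j <;> simp [Matrix.scalar_apply, Matrix.diagonal_apply, h, Matrix.one_apply]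
    rw [hd, Matrix.mul_smul, Matrix.smul_mul, Matrix.mul_one, hPQ]
  rw [Matrix.charpoly, Matrix.charpoly, hchar, Matrix.det_mul, Matrix.det_mul]
  have : P.det * Q.det = 1 := by rw [← Matrix.det_mul, hPQ, Matrix.det_one]
  calc P.det * (charmatrix A).det * Q.det
      = P.det * Q.det * (charmatrix A).det := by ring
    _ = (charmatrix A).det := by rw [this, one_mul]

lemma my_charpoly_diagonal (d : ι → ℂ) :
    (diagonal d).charpoly = ∏ i, (X - C (d i)) := by
  have : charmatrix (diagonal d) = diagonal (fun i => (X : ℂ[X]) - C (d i)) := by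
    ext i j
    by_cases h : i = j
    · subst h; simp [charmatrix_apply_eq]
    · simp [charmatrix_apply_ne _ _ _ h, diagonal_apply_ne _ h]
  rw [Matrix.charpoly, this, Matrix.det_diagonal]

lemma my_eig_sum {ρ : Matrix ι ι ℂ} (h : ρ.IsHermitian) (q : ι → ℝ) (W : Matrix ι ι ℂ)
    (hW : W * Wᴴ = 1)
    (hρ : ρ = W * diagonal (fun i => (q i : ℂ)) * Wᴴ) (f : ℝ → ℝ) :
    ∑ i, f (h.eigenvalues i) = ∑ i, f (q i) := by
  have hU : (h.eigenvectorUnitary : Matrix ι ι ℂ) * (h.eigenvectorUnitary : Matrix ι ι ℂ)ᴴ = 1 := by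
    simpa [Matrix.star_eq_conjTranspose] using Matrix.mem_unitaryGroup_iff.mp h.eigenvectorUnitary.2
  have hspec : ρ = (h.eigenvectorUnitary : Matrix ι ι ℂ)
      * diagonal (fun i => ((h.eigenvalues i : ℝ) : ℂ)) * (h.eigenvectorUnitary : Matrix ι ι ℂ)ᴴ := by
    simpa [Matrix.star_eq_conjTranspose, Function.comp_def] using h.spectral_theorem
  have hchar : (diagonal (fun i => ((h.eigenvalues i : ℝ) : ℂ))).charpoly
      = (diagonal (fun i => ((q i : ℝ) : ℂ))).charpoly := by
    rw [← my_charpoly_conj (diagonal (fun i => ((h.eigenvalues i : ℝ) : ℂ))) _ hU, ← hspec,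
      hρ, my_charpoly_conj _ _ hW]
  rw [my_charpoly_diagonal, my_charpoly_diagonal] at hchar
  have hmult : (Finset.univ.val.map (fun i => ((h.eigenvalues i : ℝ) : ℂ)))
      = (Finset.univ.val.map (fun i => ((q i : ℝ) : ℂ))) := by
    have h1 := Polynomial.roots_multiset_prod_X_sub_C
      (Finset.univ.val.map (fun i => ((h.eigenvalues i : ℝ) : ℂ)))
    have h2 := Polynomial.roots_multiset_prod_X_sub_C
      (Finset.univ.val.map (fun i => ((q i : ℝ) : ℂ)))
    rw [← h1, ← h2]
    congr 1
    rw [Multiset.map_map, Multiset.map_map]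
    calc ((Finset.univ.val.map fun i => (X - C ((h.eigenvalues i : ℝ) : ℂ)))).prod
        = ∏ i, (X - C ((h.eigenvalues i : ℝ) : ℂ)) := rfl
      _ = ∏ i, (X - C ((q i : ℝ) : ℂ)) := hchar
      _ = ((Finset.univ.val.map fun i => (X - C ((q i : ℝ) : ℂ)))).prod := rfl
  calc ∑ i, f (h.eigenvalues i)
      = ((Finset.univ.val.map (fun i => ((h.eigenvalues i : ℝ) : ℂ))).map (fun z => f z.re)).sum := by
        rw [Multiset.map_map]
        have : ((fun z : ℂ => f z.re) ∘ fun i => ((h.eigenvalues i : ℝ) : ℂ))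
            = fun i => f (h.eigenvalues i) := by funext i; simp
        rw [this]; rfl
    _ = ((Finset.univ.val.map (fun i => ((q i : ℝ) : ℂ))).map (fun z => f z.re)).sum := by rw [hmult]
    _ = ∑ i, f (q i) := by
        rw [Multiset.map_map]
        have : ((fun z : ℂ => f z.re) ∘ fun i => ((q i : ℝ) : ℂ)) = fun i => f (q i) := by
          funext i; simp
        rw [this]; rfl

lemma my_klein {ι κ : Type*} [Fintype ι] [Fintype κ]
    (p : ι → ℝ) (q : κ → ℝ) (T : ι → κ → ℝ)
    (hp : ∀ i, 0 ≤ p i) (hq : ∀ j, 0 ≤ q j) (hT : ∀ i j, 0 ≤ T i j)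
    (hrow : ∀ i, ∑ j, T i j = 1) (hcol : ∀ j, ∑ i, T i j = 1)
    (hp1 : ∑ i, p i = 1) (hq1 : ∑ j, q j = 1)
    (hz : ∀ i j, q j = 0 → p i * T i j = 0) :
    ∑ i, ∑ j, p i * T i j * Real.log (q j) ≤ ∑ i, p i * Real.log (p i) := by
  classical
  set r : ι → ℝ := fun i => ∑ j, T i j * q j with hr
  have hrnn : ∀ i, 0 ≤ r i := fun i =>
    Finset.sum_nonneg fun j _ => mul_nonneg (hT i j) (hq j)
  have key : ∀ i, ∑ j, p i * T i j * Real.log (q j) ≤ p i * Real.log (p i) + (r i - p i) := by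
    intro i
    rcases eq_or_lt_of_le (hp i) with h0 | hpi
    · simp only [← h0, zero_mul, zero_sub, zero_add, sub_zero]
      simp [← h0, hrnn i]
    · -- p i > 0
      have hTz : ∀ j, q j = 0 → T i j = 0 := by
        intro j hj
        have := hz i j hj
        rcases mul_eq_zero.mp this with h | h
        · exact absurd h (ne_of_gt hpi)
        · exact h
      set t : Finset κ := Finset.univ.filter (fun j => q j ≠ 0) with ht
      have hsub : ∀ j ∈ Finset.univ \ t, T i j = 0 := by
        intro j hj
        simp only [ht, Finset.mem_sdiff, Finset.mem_filter, Finset.mem_univ, true_and,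
          not_not] at hj
        exact hTz j hj
      have hw1 : ∑ j ∈ t, T i j = 1 := by
        rw [← hrow i]
        apply Finset.sum_subset (Finset.filter_subset _ _)
        intro j _ hj
        exact hTz j (by simpa [ht] using hj)
      have jensen : ∑ j ∈ t, T i j * Real.log (q j) ≤ Real.log (∑ j ∈ t, T i j * q j) := by
        have := (StrictConcaveOn.concaveOn strictConcaveOn_log_Ioi).le_map_sum
          (t := t) (w := fun j => T i j) (p := fun j => q j)
          (fun j _ => hT i j) hw1
          (fun j hj => by
            simp only [ht, Finset.mem_filter] at hj
            exact lt_of_le_of_ne (hq j) (Ne.symm hj.2))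
        simpa [smul_eq_mul] using this
      have hlogs : ∑ j, T i j * Real.log (q j) ≤ Real.log (r i) := by
        have e1 : ∑ j, T i j * Real.log (q j) = ∑ j ∈ t, T i j * Real.log (q j) := by
          symm
          apply Finset.sum_subset (Finset.filter_subset _ _)
          intro j _ hj
          rw [hTz j (by simpa [ht] using hj), zero_mul]
        have e2 : ∑ j ∈ t, T i j * q j = r i := by
          rw [hr]
          apply Finset.sum_subset (Finset.filter_subset _ _)
          intro j _ hj
          rw [hTz j (by simpa [ht] using hj), zero_mul]
        rw [e1, ← e2]
        exact jensen
      have hrpos : 0 < r i := by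
        obtain ⟨j, hjmem, hj⟩ : ∃ j ∈ Finset.univ, T i j ≠ 0 := by
          by_contra hcon
          push_neg at hcon
          have : ∑ j, T i j = 0 := Finset.sum_eq_zero fun j hj => hcon j hj
          rw [hrow i] at this; norm_num at this
        have hqj : 0 < q j := by
          rcases eq_or_lt_of_le (hq j) with h | h
          · exact absurd (hTz j h.symm) hj
          · exact h
        have : 0 < T i j * q j := mul_pos (lt_of_le_of_ne (hT i j) (Ne.symm hj)) hqj
        calc (0:ℝ) < T i j * q j := this
          _ ≤ r i := Finset.single_le_sum (f := fun j => T i j * q j)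
              (fun j _ => mul_nonneg (hT i j) (hq j)) hjmem
      have hlog2 : Real.log (r i) ≤ Real.log (p i) + (r i / p i - 1) := by
        have := Real.log_le_sub_one_of_pos (show 0 < r i / p i from div_pos hrpos hpi)
        rw [Real.log_div (ne_of_gt hrpos) (ne_of_gt hpi)] at this
        linarith
      calc ∑ j, p i * T i j * Real.log (q j)
          = p i * ∑ j, T i j * Real.log (q j) := by
            rw [Finset.mul_sum]; congr 1; funext j; ring
        _ ≤ p i * Real.log (r i) := by
            exact mul_le_mul_of_nonneg_left hlogs (le_of_lt hpi)
        _ ≤ p i * (Real.log (p i) + (r i / p i - 1)) :=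
            mul_le_mul_of_nonneg_left hlog2 (le_of_lt hpi)
        _ = p i * Real.log (p i) + (r i - p i) := by
            field_simp
  calc ∑ i, ∑ j, p i * T i j * Real.log (q j)
      ≤ ∑ i, (p i * Real.log (p i) + (r i - p i)) := Finset.sum_le_sum fun i _ => key i
    _ = ∑ i, p i * Real.log (p i) + (∑ i, r i - ∑ i, p i) := by
        rw [Finset.sum_add_distrib, Finset.sum_sub_distrib]
    _ = ∑ i, p i * Real.log (p i) := by
        have : ∑ i, r i = 1 := by
          rw [hr]
          calc ∑ i, ∑ j, T i j * q j = ∑ j, (∑ i, T i j) * q j := by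
                rw [Finset.sum_comm]
                congr 1; funext j
                rw [Finset.sum_mul]
          _ = ∑ j, q j := by
                apply Finset.sum_congr rfl
                intro j _
                rw [hcol j, one_mul]
          _ = 1 := hq1
        rw [this, hp1]
        ring

open Kronecker

lemma my_kron_ct {α β : Type*} [Fintype α] [Fintype β] (A : Matrix α α ℂ) (B : Matrix β β ℂ) :
    (A ⊗ₖ B)ᴴ = Aᴴ ⊗ₖ Bᴴ := by
  ext ⟨i, k⟩ ⟨j, l⟩
  simp [conjTranspose_apply, kroneckerMap_apply, mul_comm]

lemma my_ptraceSnd_herm {α β : Type*} [Fintype α] [Fintype β]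
    {M : Matrix (α × β) (α × β) ℂ} (h : M.IsHermitian) : (ptraceSnd M).IsHermitian := by
  show _ = _
  funext i j
  simp only [conjTranspose_apply, ptraceSnd, of_apply, star_sum]
  exact Finset.sum_congr rfl fun k _ => h.apply (i,k) (j,k)

lemma my_ptraceFst_herm {α β : Type*} [Fintype α] [Fintype β]
    {M : Matrix (α × β) (α × β) ℂ} (h : M.IsHermitian) : (ptraceFst M).IsHermitian := by
  show _ = _
  funext k l
  simp only [conjTranspose_apply, ptraceFst, of_apply, star_sum]
  exact Finset.sum_congr rfl fun i _ => h.apply (i,k) (i,l)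

lemma my_ptraceSnd_conj {α β : Type*} [Fintype α] [Fintype β] [DecidableEq α] [DecidableEq β]
    (M : Matrix (α × β) (α × β) ℂ) (X : Matrix α α ℂ) (Y : Matrix β β ℂ)
    (hY : Y * Yᴴ = 1) :
    ptraceSnd ((X ⊗ₖ Y)ᴴ * M * (X ⊗ₖ Y)) = Xᴴ * ptraceSnd M * X := by
  classical
  funext k k'
  have hYd : ∀ s t : β, ∑ l, star (Y s l) * Y t l = if t = s then 1 else 0 := by
    intro s t
    have := congrFun (congrFun hY t) s
    simp only [Matrix.mul_apply, conjTranspose_apply, Matrix.one_apply] at this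
    rw [← this]
    apply Finset.sum_congr rfl
    intro l _
    ring
  simp only [ptraceSnd, of_apply, Matrix.mul_apply, conjTranspose_apply, kroneckerMap_apply,
    Fintype.sum_prod_type, star_mul']
  calc ∑ l : β, ∑ j : α, ∑ t : β,
        (∑ i : α, ∑ s : β, star (X i k) * star (Y s l) * M (i,s) (j,t)) * (X j k' * Y t l)
      = ∑ j : α, ∑ t : β, ∑ l : β,
        (∑ i : α, ∑ s : β, star (X i k) * star (Y s l) * M (i,s) (j,t)) * (X j k' * Y t l) := by
        rw [Finset.sum_comm]
        exact Finset.sum_congr rfl fun j _ => Finset.sum_comm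
    _ = ∑ j : α, ∑ t : β, ∑ i : α, ∑ s : β,
        star (X i k) * M (i,s) (j,t) * X j k' * (if t = s then 1 else 0) := by
        refine Finset.sum_congr rfl fun j _ => Finset.sum_congr rfl fun t _ => ?_
        calc ∑ l : β, (∑ i : α, ∑ s : β, star (X i k) * star (Y s l) * M (i,s) (j,t))
                * (X j k' * Y t l)
            = ∑ l : β, ∑ i : α, ∑ s : β,
                star (X i k) * star (Y s l) * M (i,s) (j,t) * (X j k' * Y t l) := by
              simp only [Finset.sum_mul]
          _ = ∑ i : α, ∑ s : β, ∑ l : β,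
                star (X i k) * star (Y s l) * M (i,s) (j,t) * (X j k' * Y t l) := by
              rw [Finset.sum_comm]
              exact Finset.sum_congr rfl fun i _ => Finset.sum_comm
          _ = ∑ i : α, ∑ s : β,
                star (X i k) * M (i,s) (j,t) * X j k' * (if t = s then 1 else 0) := by
              refine Finset.sum_congr rfl fun i _ => Finset.sum_congr rfl fun s _ => ?_
              rw [← hYd s t, Finset.mul_sum]
              apply Finset.sum_congr rfl
              intro l _
              ring
    _ = ∑ j : α, ∑ i : α, ∑ s : β, ∑ t : β,
        star (X i k) * M (i,s) (j,t) * X j k' * (if t = s then 1 else 0) := by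
        refine Finset.sum_congr rfl fun j _ => ?_
        rw [Finset.sum_comm]
        exact Finset.sum_congr rfl fun i _ => Finset.sum_comm
    _ = ∑ j : α, ∑ i : α, ∑ s : β, star (X i k) * M (i,s) (j,s) * X j k' := by
        refine Finset.sum_congr rfl fun j _ => Finset.sum_congr rfl fun i _ =>
          Finset.sum_congr rfl fun s _ => ?_
        simp [mul_ite, mul_one, mul_zero, Finset.sum_ite_eq']
    _ = ∑ j : α, (∑ i : α, star (X i k) * ∑ s : β, M (i,s) (j,s)) * X j k' := by
        refine Finset.sum_congr rfl fun j _ => ?_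
        simp only [Finset.mul_sum, Finset.sum_mul]

lemma my_ptraceFst_conj {α β : Type*} [Fintype α] [Fintype β] [DecidableEq α] [DecidableEq β]
    (M : Matrix (α × β) (α × β) ℂ) (X : Matrix α α ℂ) (Y : Matrix β β ℂ)
    (hX : X * Xᴴ = 1) :
    ptraceFst ((X ⊗ₖ Y)ᴴ * M * (X ⊗ₖ Y)) = Yᴴ * ptraceFst M * Y := by
  classical
  funext u v
  have hXd : ∀ a b : α, ∑ i, star (X a i) * X b i = if b = a then 1 else 0 := by
    intro a b
    have := congrFun (congrFun hX b) a
    simp only [Matrix.mul_apply, conjTranspose_apply, Matrix.one_apply] at this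
    rw [← this]
    apply Finset.sum_congr rfl
    intro i _
    ring
  simp only [ptraceFst, of_apply, Matrix.mul_apply, conjTranspose_apply, kroneckerMap_apply,
    Fintype.sum_prod_type, star_mul']
  calc ∑ i : α, ∑ b : α, ∑ t : β,
        (∑ a : α, ∑ s : β, star (X a i) * star (Y s u) * M (a,s) (b,t)) * (X b i * Y t v)
      = ∑ b : α, ∑ t : β, ∑ i : α,
        (∑ a : α, ∑ s : β, star (X a i) * star (Y s u) * M (a,s) (b,t)) * (X b i * Y t v) := by
        rw [Finset.sum_comm]
        exact Finset.sum_congr rfl fun b _ => Finset.sum_comm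
    _ = ∑ b : α, ∑ t : β, ∑ a : α, ∑ s : β,
        star (Y s u) * M (a,s) (b,t) * Y t v * (if b = a then 1 else 0) := by
        refine Finset.sum_congr rfl fun b _ => Finset.sum_congr rfl fun t _ => ?_
        calc ∑ i : α, (∑ a : α, ∑ s : β, star (X a i) * star (Y s u) * M (a,s) (b,t))
                * (X b i * Y t v)
            = ∑ i : α, ∑ a : α, ∑ s : β,
                star (X a i) * star (Y s u) * M (a,s) (b,t) * (X b i * Y t v) := by
              simp only [Finset.sum_mul]
          _ = ∑ a : α, ∑ s : β, ∑ i : α,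
                star (X a i) * star (Y s u) * M (a,s) (b,t) * (X b i * Y t v) := by
              rw [Finset.sum_comm]
              exact Finset.sum_congr rfl fun a _ => Finset.sum_comm
          _ = ∑ a : α, ∑ s : β,
                star (Y s u) * M (a,s) (b,t) * Y t v * (if b = a then 1 else 0) := by
              refine Finset.sum_congr rfl fun a _ => Finset.sum_congr rfl fun s _ => ?_
              rw [← hXd a b, Finset.mul_sum]
              apply Finset.sum_congr rfl
              intro i _
              ring
    _ = ∑ t : β, ∑ b : α, ∑ a : α, ∑ s : β,
        star (Y s u) * M (a,s) (b,t) * Y t v * (if b = a then 1 else 0) := by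
        rw [Finset.sum_comm]
    _ = ∑ t : β, ∑ b : α, ∑ s : β, ∑ a : α,
        star (Y s u) * M (a,s) (b,t) * Y t v * (if b = a then 1 else 0) := by
        refine Finset.sum_congr rfl fun t _ => Finset.sum_congr rfl fun b _ => ?_
        exact Finset.sum_comm
    _ = ∑ t : β, ∑ s : β, ∑ b : α, ∑ a : α,
        star (Y s u) * M (a,s) (b,t) * Y t v * (if b = a then 1 else 0) := by
        refine Finset.sum_congr rfl fun t _ => ?_
        exact Finset.sum_comm
    _ = ∑ t : β, ∑ s : β, ∑ a : α, ∑ b : α,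
        star (Y s u) * M (a,s) (b,t) * Y t v * (if b = a then 1 else 0) := by
        refine Finset.sum_congr rfl fun t _ => Finset.sum_congr rfl fun s _ => ?_
        exact Finset.sum_comm
    _ = ∑ t : β, ∑ s : β, ∑ a : α, star (Y s u) * M (a,s) (a,t) * Y t v := by
        refine Finset.sum_congr rfl fun t _ => Finset.sum_congr rfl fun s _ =>
          Finset.sum_congr rfl fun a _ => ?_
        simp [mul_ite, mul_one, mul_zero, Finset.sum_ite_eq']
    _ = ∑ t : β, (∑ s : β, star (Y s u) * ∑ a : α, M (a,s) (a,t)) * Y t v := by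
        refine Finset.sum_congr rfl fun t _ => ?_
        simp only [Finset.mul_sum, Finset.sum_mul]

lemma my_normSq_row_sum {ι : Type*} [Fintype ι] [DecidableEq ι]
    (M : Matrix ι ι ℂ) (hM : M * Mᴴ = 1) (i : ι) : ∑ j, Complex.normSq (M i j) = 1 := by
  have h := congrFun (congrFun hM i) i
  simp only [Matrix.mul_apply, conjTranspose_apply, Matrix.one_apply_eq] at h
  have h2 : ∑ j, ((Complex.normSq (M i j) : ℝ) : ℂ) = 1 := by
    rw [← h]
    apply Finset.sum_congr rfl
    intro j _
    rw [← Complex.mul_conj]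
    rfl
  exact_mod_cast h2

lemma my_normSq_col_sum {ι : Type*} [Fintype ι] [DecidableEq ι]
    (M : Matrix ι ι ℂ) (hM : Mᴴ * M = 1) (j : ι) : ∑ i, Complex.normSq (M i j) = 1 := by
  have h := congrFun (congrFun hM j) j
  simp only [Matrix.mul_apply, conjTranspose_apply, Matrix.one_apply_eq] at h
  have h2 : ∑ i, ((Complex.normSq (M i j) : ℝ) : ℂ) = 1 := by
    rw [← h]
    apply Finset.sum_congr rfl
    intro i _
    rw [Complex.normSq_eq_conj_mul_self]
    rfl
  exact_mod_cast h2

end AuxLemmas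

open Kronecker in
/-- Proposition 1(b): subadditivity `H(X) + H(Y) ≥ H(XY)` of the von Neumann entropy for
any density matrix on `ℂ^m ⊗ ℂ^n`, with equality for product states `σ ⊗ τ`. -/
theorem entropy_subadditivity (m n : ℕ) (hm : 0 < m) (hn : 0 < n) :
    (∀ ρ : Matrix (Fin m × Fin n) (Fin m × Fin n) ℂ, ρ.PosSemidef → ρ.trace = 1 →
      vnEntropy (ptraceSnd ρ) + vnEntropy (ptraceFst ρ) ≥ vnEntropy ρ) ∧
    (∀ (σ : Matrix (Fin m) (Fin m) ℂ) (τ : Matrix (Fin n) (Fin n) ℂ),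
      σ.PosSemidef → σ.trace = 1 → τ.PosSemidef → τ.trace = 1 →
      vnEntropy (σ ⊗ₖ τ) = vnEntropy σ + vnEntropy τ) := by
  classical
  constructor
  · -- subadditivity
    intro ρ hρ htr
    have h : ρ.IsHermitian := hρ.1
    set p : Fin m × Fin n → ℝ := h.eigenvalues with hpdef
    have hpnn : ∀ i, 0 ≤ p i := fun i => hρ.eigenvalues_nonneg i
    set U : Matrix (Fin m × Fin n) (Fin m × Fin n) ℂ := (h.eigenvectorUnitary : Matrix (Fin m × Fin n) (Fin m × Fin n) ℂ) with hUdef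
    have hU1 : U * Uᴴ = 1 := by
      simpa [Matrix.star_eq_conjTranspose] using
        Matrix.mem_unitaryGroup_iff.mp h.eigenvectorUnitary.2
    have hU1' : Uᴴ * U = 1 := mul_eq_one_comm.mp hU1
    have hspec : ρ = U * diagonal (fun i => ((p i : ℝ) : ℂ)) * Uᴴ := by
      simpa [Matrix.star_eq_conjTranspose, Function.comp_def] using h.spectral_theorem
    have hp1 : ∑ i, p i = 1 := by
      have h2 : ρ.trace = ∑ i, ((p i : ℝ) : ℂ) := by
        rw [hspec, Matrix.trace_mul_comm (U * diagonal _) Uᴴ, ← Matrix.mul_assoc, hU1',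
          Matrix.one_mul, Matrix.trace_diagonal]
      rw [htr] at h2
      exact_mod_cast h2.symm
    -- partial traces
    have hA : (ptraceSnd ρ).IsHermitian := my_ptraceSnd_herm h
    have hB : (ptraceFst ρ).IsHermitian := my_ptraceFst_herm h
    set a : Fin m → ℝ := hA.eigenvalues with hadef
    set b : Fin n → ℝ := hB.eigenvalues with hbdef
    set X : Matrix (Fin m) (Fin m) ℂ := (hA.eigenvectorUnitary : Matrix (Fin m) (Fin m) ℂ) with hXdef
    set Y : Matrix (Fin n) (Fin n) ℂ := (hB.eigenvectorUnitary : Matrix (Fin n) (Fin n) ℂ) with hYdef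
    have hX1 : X * Xᴴ = 1 := by
      simpa [Matrix.star_eq_conjTranspose] using
        Matrix.mem_unitaryGroup_iff.mp hA.eigenvectorUnitary.2
    have hX1' : Xᴴ * X = 1 := mul_eq_one_comm.mp hX1
    have hY1 : Y * Yᴴ = 1 := by
      simpa [Matrix.star_eq_conjTranspose] using
        Matrix.mem_unitaryGroup_iff.mp hB.eigenvectorUnitary.2
    have hY1' : Yᴴ * Y = 1 := mul_eq_one_comm.mp hY1
    have hspecA : ptraceSnd ρ = X * diagonal (fun k => ((a k : ℝ) : ℂ)) * Xᴴ := by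
      simpa [Matrix.star_eq_conjTranspose, Function.comp_def] using hA.spectral_theorem
    have hspecB : ptraceFst ρ = Y * diagonal (fun l => ((b l : ℝ) : ℂ)) * Yᴴ := by
      simpa [Matrix.star_eq_conjTranspose, Function.comp_def] using hB.spectral_theorem
    have hdiagA : Xᴴ * ptraceSnd ρ * X = diagonal (fun k => ((a k : ℝ) : ℂ)) := by
      rw [hspecA]
      calc Xᴴ * (X * diagonal (fun k => ((a k : ℝ) : ℂ)) * Xᴴ) * X
          = (Xᴴ * X) * diagonal (fun k => ((a k : ℝ) : ℂ)) * (Xᴴ * X) := by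
            simp only [Matrix.mul_assoc]
        _ = diagonal (fun k => ((a k : ℝ) : ℂ)) := by
            rw [hX1', Matrix.one_mul, Matrix.mul_one]
    have hdiagB : Yᴴ * ptraceFst ρ * Y = diagonal (fun l => ((b l : ℝ) : ℂ)) := by
      rw [hspecB]
      calc Yᴴ * (Y * diagonal (fun l => ((b l : ℝ) : ℂ)) * Yᴴ) * Y
          = (Yᴴ * Y) * diagonal (fun l => ((b l : ℝ) : ℂ)) * (Yᴴ * Y) := by
            simp only [Matrix.mul_assoc]
        _ = diagonal (fun l => ((b l : ℝ) : ℂ)) := by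
            rw [hY1', Matrix.one_mul, Matrix.mul_one]
    -- the joint eigenbasis matrix and the doubly stochastic matrix T
    set W : Matrix (Fin m × Fin n) (Fin m × Fin n) ℂ := X ⊗ₖ Y with hWdef
    have hWct : Wᴴ = Xᴴ ⊗ₖ Yᴴ := my_kron_ct X Y
    have hW1 : W * Wᴴ = 1 := by
      rw [hWct, hWdef, ← Matrix.mul_kronecker_mul, hX1, hY1, Matrix.one_kronecker_one]
    have hW1' : Wᴴ * W = 1 := mul_eq_one_comm.mp hW1
    set N : Matrix (Fin m × Fin n) (Fin m × Fin n) ℂ := Uᴴ * W with hNdef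
    have hNct : Nᴴ = Wᴴ * U := by
      rw [hNdef, Matrix.conjTranspose_mul, Matrix.conjTranspose_conjTranspose]
    have hN1 : N * Nᴴ = 1 := by
      rw [hNct, hNdef, Matrix.mul_assoc, ← Matrix.mul_assoc W Wᴴ U, hW1, Matrix.one_mul, hU1']
    have hN1' : Nᴴ * N = 1 := mul_eq_one_comm.mp hN1
    set T : (Fin m × Fin n) → (Fin m × Fin n) → ℝ := fun i j => Complex.normSq (N i j)
      with hTdef
    have hTnn : ∀ i j, 0 ≤ T i j := fun i j => Complex.normSq_nonneg _
    have hTrow : ∀ i, ∑ j, T i j = 1 := fun i => my_normSq_row_sum N hN1 i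
    have hTcol : ∀ j, ∑ i, T i j = 1 := fun j => my_normSq_col_sum N hN1' j
    set c : (Fin m × Fin n) → ℝ := fun j => ∑ i, p i * T i j with hcdef
    have hcnn : ∀ j, 0 ≤ c j := fun j =>
      Finset.sum_nonneg fun i _ => mul_nonneg (hpnn i) (hTnn i j)
    have hWρW : Wᴴ * ρ * W = Nᴴ * diagonal (fun i => ((p i : ℝ) : ℂ)) * N := by
      rw [hspec, hNct, hNdef]
      simp only [Matrix.mul_assoc]
    have hcdiag : ∀ j, (Wᴴ * ρ * W) j j = ((c j : ℝ) : ℂ) := by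
      intro j
      rw [hWρW]
      have e1 : (Nᴴ * diagonal (fun i => ((p i : ℝ) : ℂ)) * N) j j
          = ∑ i, star (N i j) * ((p i : ℝ) : ℂ) * N i j := by
        rw [Matrix.mul_assoc, Matrix.mul_apply]
        apply Finset.sum_congr rfl
        intro i _
        rw [Matrix.conjTranspose_apply, Matrix.diagonal_mul]
        ring
      rw [e1, hcdef]
      push_cast
      apply Finset.sum_congr rfl
      intro i _
      have : ((Complex.normSq (N i j) : ℝ) : ℂ) = star (N i j) * N i j := by
        rw [Complex.normSq_eq_conj_mul_self]; rfl
      rw [hTdef]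
      push_cast
      rw [this]
      ring
    -- row and column sums of c
    have hcs : ∀ k, ∑ l, c (k, l) = a k := by
      intro k
      have h1 : ptraceSnd (Wᴴ * ρ * W) = diagonal (fun k => ((a k : ℝ) : ℂ)) := by
        rw [hWdef, my_ptraceSnd_conj ρ X Y hY1]
        exact hdiagA
      have h2 := congrFun (congrFun h1 k) k
      have h3 : ptraceSnd (Wᴴ * ρ * W) k k = ∑ l, ((c (k, l) : ℝ) : ℂ) := by
        simp only [ptraceSnd, Matrix.of_apply]
        exact Finset.sum_congr rfl fun l _ => hcdiag (k, l)
      rw [h3] at h2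
      simp only [Matrix.diagonal_apply_eq] at h2
      exact_mod_cast h2
    have hbs : ∀ l, ∑ k, c (k, l) = b l := by
      intro l
      have h1 : ptraceFst (Wᴴ * ρ * W) = diagonal (fun l => ((b l : ℝ) : ℂ)) := by
        rw [hWdef, my_ptraceFst_conj ρ X Y hX1]
        exact hdiagB
      have h2 := congrFun (congrFun h1 l) l
      have h3 : ptraceFst (Wᴴ * ρ * W) l l = ∑ k, ((c (k, l) : ℝ) : ℂ) := by
        simp only [ptraceFst, Matrix.of_apply]
        exact Finset.sum_congr rfl fun k _ => hcdiag (k, l)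
      rw [h3] at h2
      simp only [Matrix.diagonal_apply_eq] at h2
      exact_mod_cast h2
    have hann : ∀ k, 0 ≤ a k := fun k => (hcs k) ▸ Finset.sum_nonneg fun l _ => hcnn (k, l)
    have hbnn : ∀ l, 0 ≤ b l := fun l => (hbs l) ▸ Finset.sum_nonneg fun k _ => hcnn (k, l)
    have hctot : ∑ j, c j = 1 := by
      calc ∑ j, c j = ∑ i, ∑ j, p i * T i j := Finset.sum_comm
        _ = ∑ i, p i * ∑ j, T i j := by
            exact Finset.sum_congr rfl fun i _ => (Finset.mul_sum _ _ _).symm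
        _ = ∑ i, p i := by
            exact Finset.sum_congr rfl fun i _ => by rw [hTrow i, mul_one]
        _ = 1 := hp1
    have ha1 : ∑ k, a k = 1 := by
      calc ∑ k, a k = ∑ k, ∑ l, c (k, l) := by
            exact Finset.sum_congr rfl fun k _ => (hcs k).symm
        _ = ∑ j, c j := by rw [← Fintype.sum_prod_type]
        _ = 1 := hctot
    have hb1 : ∑ l, b l = 1 := by
      calc ∑ l, b l = ∑ l, ∑ k, c (k, l) := by
            exact Finset.sum_congr rfl fun l _ => (hbs l).symm
        _ = ∑ k, ∑ l, c (k, l) := Finset.sum_comm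
        _ = ∑ j, c j := by rw [← Fintype.sum_prod_type]
        _ = 1 := hctot
    set q : Fin m × Fin n → ℝ := fun j => a j.1 * b j.2 with hqdef
    have hqnn : ∀ j, 0 ≤ q j := fun j => mul_nonneg (hann j.1) (hbnn j.2)
    have hq1 : ∑ j, q j = 1 := by
      rw [hqdef, Fintype.sum_prod_type]
      calc ∑ k, ∑ l, a k * b l = ∑ k, a k * ∑ l, b l := by
            exact Finset.sum_congr rfl fun k _ => (Finset.mul_sum _ _ _).symm
        _ = 1 := by
            rw [hb1]
            simpa using ha1
    have hczero : ∀ j, q j = 0 → c j = 0 := by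
      rintro ⟨k, l⟩ hj
      rcases mul_eq_zero.mp hj with h0 | h0
      · have hsum : ∑ l', c (k, l') = 0 := by rw [hcs k, h0]
        exact (Finset.sum_eq_zero_iff_of_nonneg fun l' _ => hcnn (k, l')).mp hsum l
          (Finset.mem_univ l)
      · have hsum : ∑ k', c (k', l) = 0 := by rw [hbs l, h0]
        exact (Finset.sum_eq_zero_iff_of_nonneg fun k' _ => hcnn (k', l)).mp hsum k
          (Finset.mem_univ k)
    have hz : ∀ i j, q j = 0 → p i * T i j = 0 := by
      intro i j hj
      have h0 : ∑ i', p i' * T i' j = 0 := hczero j hj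
      exact (Finset.sum_eq_zero_iff_of_nonneg fun i' _ =>
        mul_nonneg (hpnn i') (hTnn i' j)).mp h0 i (Finset.mem_univ i)
    have klein := my_klein p q T hpnn hqnn hTnn hTrow hTcol hp1 hq1 hz
    have hLHS : ∑ i, ∑ j, p i * T i j * Real.log (q j) = ∑ j, c j * Real.log (q j) := by
      rw [Finset.sum_comm]
      apply Finset.sum_congr rfl
      intro j _
      rw [hcdef, Finset.sum_mul]
    have hsplit : ∑ j, c j * Real.log (q j)
        = ∑ k, a k * Real.log (a k) + ∑ l, b l * Real.log (b l) := by
      have e1 : ∀ j : Fin m × Fin n, c j * Real.log (q j)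
          = c j * Real.log (a j.1) + c j * Real.log (b j.2) := by
        rintro ⟨k, l⟩
        by_cases h0 : a k = 0
        · have : c (k, l) = 0 := hczero (k, l) (by simp [hqdef, h0])
          simp [this]
        by_cases h1 : b l = 0
        · have : c (k, l) = 0 := hczero (k, l) (by simp [hqdef, h1])
          simp [this]
        rw [hqdef]
        show c (k, l) * Real.log (a k * b l) = _
        rw [Real.log_mul h0 h1]
        ring
      calc ∑ j, c j * Real.log (q j)
          = ∑ j : Fin m × Fin n, (c j * Real.log (a j.1) + c j * Real.log (b j.2)) := by
            exact Finset.sum_congr rfl fun j _ => e1 j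
        _ = ∑ j : Fin m × Fin n, c j * Real.log (a j.1)
            + ∑ j : Fin m × Fin n, c j * Real.log (b j.2) := Finset.sum_add_distrib
        _ = ∑ k, a k * Real.log (a k) + ∑ l, b l * Real.log (b l) := by
            congr 1
            · rw [Fintype.sum_prod_type]
              apply Finset.sum_congr rfl
              intro k _
              calc ∑ l, c (k, l) * Real.log (a (k, l).1)
                  = ∑ l, c (k, l) * Real.log (a k) := Finset.sum_congr rfl fun l _ => rfl
                _ = (∑ l, c (k, l)) * Real.log (a k) := (Finset.sum_mul _ _ _).symm
                _ = a k * Real.log (a k) := by rw [hcs k]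
            · rw [Fintype.sum_prod_type_right]
              apply Finset.sum_congr rfl
              intro l _
              calc ∑ k, c (k, l) * Real.log (b (k, l).2)
                  = ∑ k, c (k, l) * Real.log (b l) := Finset.sum_congr rfl fun k _ => rfl
                _ = (∑ k, c (k, l)) * Real.log (b l) := (Finset.sum_mul _ _ _).symm
                _ = b l * Real.log (b l) := by rw [hbs l]
    -- put everything together
    have hEρ : vnEntropy ρ = -∑ i, p i * Real.log (p i) := by
      rw [vnEntropy, dif_pos h, ← Finset.sum_neg_distrib]
      apply Finset.sum_congr rfl
      intro i _
      rw [Real.negMulLog]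
      ring
    have hEA : vnEntropy (ptraceSnd ρ) = -∑ k, a k * Real.log (a k) := by
      rw [vnEntropy, dif_pos hA, ← Finset.sum_neg_distrib]
      apply Finset.sum_congr rfl
      intro k _
      rw [Real.negMulLog]
      ring
    have hEB : vnEntropy (ptraceFst ρ) = -∑ l, b l * Real.log (b l) := by
      rw [vnEntropy, dif_pos hB, ← Finset.sum_neg_distrib]
      apply Finset.sum_congr rfl
      intro l _
      rw [Real.negMulLog]
      ring
    rw [hLHS, hsplit] at klein
    rw [hEρ, hEA, hEB]
    linarith
  · -- equality for product states
    intro σ τ hσ hσtr hτ hτtr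
    have hσh : σ.IsHermitian := hσ.1
    have hτh : τ.IsHermitian := hτ.1
    set a : Fin m → ℝ := hσh.eigenvalues with hadef
    set b : Fin n → ℝ := hτh.eigenvalues with hbdef
    set X : Matrix (Fin m) (Fin m) ℂ := (hσh.eigenvectorUnitary : Matrix (Fin m) (Fin m) ℂ)
      with hXdef
    set Y : Matrix (Fin n) (Fin n) ℂ := (hτh.eigenvectorUnitary : Matrix (Fin n) (Fin n) ℂ)
      with hYdef
    have hX1 : X * Xᴴ = 1 := by
      simpa [Matrix.star_eq_conjTranspose] using
        Matrix.mem_unitaryGroup_iff.mp hσh.eigenvectorUnitary.2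
    have hX1' : Xᴴ * X = 1 := mul_eq_one_comm.mp hX1
    have hY1 : Y * Yᴴ = 1 := by
      simpa [Matrix.star_eq_conjTranspose] using
        Matrix.mem_unitaryGroup_iff.mp hτh.eigenvectorUnitary.2
    have hspecσ : σ = X * diagonal (fun k => ((a k : ℝ) : ℂ)) * Xᴴ := by
      simpa [Matrix.star_eq_conjTranspose, Function.comp_def] using hσh.spectral_theorem
    have hspecτ : τ = Y * diagonal (fun l => ((b l : ℝ) : ℂ)) * Yᴴ := by
      simpa [Matrix.star_eq_conjTranspose, Function.comp_def] using hτh.spectral_theorem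
    have ha1 : ∑ k, a k = 1 := by
      have h2 : σ.trace = ∑ k, ((a k : ℝ) : ℂ) := by
        rw [hspecσ, Matrix.trace_mul_comm (X * diagonal _) Xᴴ, ← Matrix.mul_assoc, hX1',
          Matrix.one_mul, Matrix.trace_diagonal]
      rw [hσtr] at h2
      exact_mod_cast h2.symm
    have hb1 : ∑ l, b l = 1 := by
      have hY1' : Yᴴ * Y = 1 := mul_eq_one_comm.mp hY1
      have h2 : τ.trace = ∑ l, ((b l : ℝ) : ℂ) := by
        rw [hspecτ, Matrix.trace_mul_comm (Y * diagonal _) Yᴴ, ← Matrix.mul_assoc, hY1',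
          Matrix.one_mul, Matrix.trace_diagonal]
      rw [hτtr] at h2
      exact_mod_cast h2.symm
    have hW1 : (X ⊗ₖ Y) * (X ⊗ₖ Y)ᴴ = 1 := by
      rw [my_kron_ct, ← Matrix.mul_kronecker_mul, hX1, hY1, Matrix.one_kronecker_one]
    have hkr : σ ⊗ₖ τ = (X ⊗ₖ Y)
        * diagonal (fun j : Fin m × Fin n => ((a j.1 * b j.2 : ℝ) : ℂ)) * (X ⊗ₖ Y)ᴴ := by
      have hd : (diagonal (fun k => ((a k : ℝ) : ℂ))) ⊗ₖ (diagonal (fun l => ((b l : ℝ) : ℂ)))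
          = diagonal (fun j : Fin m × Fin n => ((a j.1 * b j.2 : ℝ) : ℂ)) := by
        rw [Matrix.diagonal_kronecker_diagonal]
        congr 1
        funext j
        push_cast
        rfl
      rw [hspecσ, hspecτ, Matrix.mul_kronecker_mul, Matrix.mul_kronecker_mul, hd, my_kron_ct]
    have hkrherm : (σ ⊗ₖ τ).IsHermitian := by
      show _ = _
      rw [hkr]
      have hd : (diagonal (fun j : Fin m × Fin n => ((a j.1 * b j.2 : ℝ) : ℂ)))ᴴ
          = diagonal (fun j : Fin m × Fin n => ((a j.1 * b j.2 : ℝ) : ℂ)) := by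
        rw [Matrix.diagonal_conjTranspose]
        congr 1
        funext j
        simp [Pi.star_def, Complex.conj_ofReal]
      simp only [Matrix.conjTranspose_mul, Matrix.conjTranspose_conjTranspose, hd,
        Matrix.mul_assoc]
    have heig := my_eig_sum hkrherm (fun j : Fin m × Fin n => a j.1 * b j.2) (X ⊗ₖ Y)
      hW1 hkr Real.negMulLog
    have hEστ : vnEntropy (σ ⊗ₖ τ) = ∑ j : Fin m × Fin n, Real.negMulLog (a j.1 * b j.2) := by
      rw [vnEntropy, dif_pos hkrherm]
      exact heig
    have hEσ : vnEntropy σ = ∑ k, Real.negMulLog (a k) := by rw [vnEntropy, dif_pos hσh]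
    have hEτ : vnEntropy τ = ∑ l, Real.negMulLog (b l) := by rw [vnEntropy, dif_pos hτh]
    rw [hEστ, hEσ, hEτ]
    calc ∑ j : Fin m × Fin n, Real.negMulLog (a j.1 * b j.2)
        = ∑ k, ∑ l, (b l * Real.negMulLog (a k) + a k * Real.negMulLog (b l)) := by
          rw [Fintype.sum_prod_type]
          exact Finset.sum_congr rfl fun k _ => Finset.sum_congr rfl fun l _ =>
            Real.negMulLog_mul (a k) (b l)
      _ = ∑ k, ((∑ l, b l) * Real.negMulLog (a k) + a k * ∑ l, Real.negMulLog (b l)) := by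
          refine Finset.sum_congr rfl fun k _ => ?_
          rw [Finset.sum_add_distrib, Finset.sum_mul, Finset.mul_sum]
      _ = ∑ k, (Real.negMulLog (a k) + a k * ∑ l, Real.negMulLog (b l)) := by
          refine Finset.sum_congr rfl fun k _ => ?_
          rw [hb1, one_mul]
      _ = ∑ k, Real.negMulLog (a k) + (∑ k, a k) * ∑ l, Real.negMulLog (b l) := by
          rw [Finset.sum_add_distrib, Finset.sum_mul]
      _ = ∑ k, Real.negMulLog (a k) + ∑ l, Real.negMulLog (b l) := by
          rw [ha1, one_mul]
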